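/- Under the standing assumptions, there exists ε > 0 such that e^{εt} P(X_t(𝟏) ≤ εt) → 0 as t → ∞. -/

import Mathlib

/-!
Formalization of statements from "A version of the classical Pólya urn scheme with
innovations" (Bertoin). The space of colors is a Borel space `S`; after each sampling
of a ball of color `s`, one returns `C` copies of it together with innovation balls
given by a finite point process `ξ`, where `(C, ξ)` has law `P_s`.
-/

open MeasureTheory ProbabilityTheory Filter Set
open scoped ENNReal NNReal Classical

noncomputable section

namespace PolyaUrn

variable {S : Type*} [MeasurableSpace S] {Ω : Type*} [mΩ : MeasurableSpace Ω]

/-- The pairing `ν(f) = ∫_S f dν`. -/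
def pairing (m : Measure S) (f : S → ℝ) : ℝ := ∫ s, f s ∂m

/-- The total mass `ν(𝟏)` of a measure, as a real number. -/
def mass (m : Measure S) : ℝ := (m Set.univ).toReal

/-- The normalized probability measure `ν̄ = ν(𝟏)⁻¹ ν`. -/
def normalize (m : Measure S) : Measure S := (m Set.univ)⁻¹ • m

/-- Bounded measurable real-valued functions (the class `L^∞`). -/
def BddMeas (f : S → ℝ) : Prop := Measurable f ∧ ∃ b : ℝ, ∀ s, |f s| ≤ b

/-- Finite counting measures (finite point configurations) on `S`. -/
def IsCounting (m : Measure S) : Prop :=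
  ∃ (k : ℕ) (z : Fin k → S), m = ∑ i : Fin k, Measure.dirac (z i)

/-- One replacement step of the urn: the sampled ball of color `s` is returned together
with `y.1` further copies of it (`y.1 = -1` meaning that it is removed) and the
innovation balls `y.2`. -/
def step (m : Measure S) (s : S) (y : ℤ × Measure S) : Measure S :=
  (m + y.2 + ((y.1 + 1).toNat • Measure.dirac s)) - Measure.dirac s

/-- The natural (discrete-time) filtration of the urn process. -/
def natFiltD (U : ℕ → Ω → Measure S) (n : ℕ) : MeasurableSpace Ω :=
  ⨆ k ∈ Finset.range (n + 1), MeasurableSpace.comap (U k) inferInstance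

/-- A Pólya urn scheme with innovations, under the standing assumptions (E1)–(E4). -/
structure UrnScheme (S : Type*) [MeasurableSpace S] (Ω : Type*) [mΩ : MeasurableSpace Ω]
    (P : Measure Ω) where
  /-- the replacement kernel: `K s` is the law `P_s` of the pair `(C, ξ)` -/
  K : Kernel S (ℤ × Measure S)
  K_markov : IsMarkovKernel K
  /-- intensity measure of innovations -/
  μ : Measure S
  μ_fin : IsFiniteMeasure μ
  μ_ne : μ ≠ 0
  /-- the modulation function, bounded away from `0` and `∞` -/
  a : S → ℝ
  a_meas : Measurable a
  a_pos : ∃ ε : ℝ, 0 < ε ∧ ∀ s, ε ≤ a s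
  a_bdd : ∃ A : ℝ, ∀ s, a s ≤ A
  /-- the common value `λ₂` of `E_s(C)` -/
  lam2 : ℝ
  /-- (E1): `C ≥ -1`, `ξ` is a finite point process, and `C + ξ(𝟏) ≥ 0`, a.s. -/
  E1 : ∀ s, ∀ᵐ y ∂(K s), -1 ≤ y.1 ∧ IsCounting y.2 ∧ 0 ≤ (y.1 : ℝ) + mass y.2
  /-- (E2): `E_s(C) = λ₂` does not depend on `s` -/
  E2 : ∀ s, ∫ y, ((y.1 : ℝ)) ∂(K s) = lam2
  /-- (E3): `E_s(ξ(f)) = a(s) μ(f)` -/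
  E3 : ∀ s, ∀ f : S → ℝ, BddMeas f → ∫ y, pairing y.2 f ∂(K s) = a s * ∫ x, f x ∂μ
  /-- (E4), lower bound: `inf_s P_s(C + ξ(𝟏) ≥ 1) > 0` -/
  E4lower : ∃ c : ℝ, 0 < c ∧ ∀ s, c ≤ ((K s) {y | 1 ≤ (y.1 : ℝ) + mass y.2}).toReal
  /-- (E4), upper bound: `sup_s E_s((C + ξ(𝟏))²) < ∞` -/
  E4upper : ∃ B : ℝ, ∀ s, ∫ y, ((y.1 : ℝ) + mass y.2) ^ 2 ∂(K s) ≤ B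
  /-- the urn process -/
  U : ℕ → Ω → Measure S
  U_meas : ∀ n, Measurable (U n)
  /-- the initial composition of the urn -/
  m0 : Measure S
  m0_counting : IsCounting m0
  m0_ne : m0 ≠ 0
  U_zero : ∀ ω, U 0 ω = m0
  /-- the urn dynamics: conditionally on `U_0, …, U_n`, a color `s` is sampled according
  to `Ū_n` and an independent replacement `(C, ξ)` with law `P_s` is performed. -/
  dyn : ∀ (n : ℕ) (Φ : Measure S → ℝ), Measurable Φ → (∃ b : ℝ, ∀ m, |Φ m| ≤ b) →
    P[(fun ω => Φ (U (n + 1) ω)) | natFiltD U n] =ᵐ[P]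
      fun ω => ∫ s, (∫ y, Φ (step (U n ω) s y) ∂(K s)) ∂(normalize (U n ω))

namespace UrnScheme

variable {P : Measure Ω} (E : UrnScheme S Ω P)

/-- the eigenvalue `λ₁ = E_s(C) + μ(a)` -/
def lam1 : ℝ := E.lam2 + ∫ s, E.a s ∂E.μ

/-- the ratio `ρ = λ₂/λ₁` -/
def rho : ℝ := E.lam2 / E.lam1

/-- the normalized innovation intensity `μ̄` -/
def barμ : Measure S := normalize E.μ

/-- the quadratic form `σ²(f) = ∫_S E_s(μ̄(f²) C² + ξ(f)²) μ̄(ds)` -/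
def sigmaSq (f : S → ℝ) : ℝ :=
  ∫ s, (∫ y, (∫ x, f x ^ 2 ∂E.barμ) * ((y.1 : ℝ)) ^ 2 + pairing y.2 f ^ 2 ∂(E.K s)) ∂E.barμ

/-- the covariance `E(G(f)G(g)) = ∫_S E_s(μ̄(fg) C² + ξ(f)ξ(g)) μ̄(ds)` of the
Gaussian process `G` -/
def cov (f g : S → ℝ) : ℝ :=
  ∫ s, (∫ y, (∫ x, f x * g x ∂E.barμ) * ((y.1 : ℝ)) ^ 2 +
    pairing y.2 f * pairing y.2 g ∂(E.K s)) ∂E.barμ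

/-- `Q(m, f) = ∫_S m̄(ds) E_s((f(s) C + ξ(f))²)` -/
def Q (m : Measure S) (f : S → ℝ) : ℝ :=
  ∫ s, (∫ y, (f s * (y.1 : ℝ) + pairing y.2 f) ^ 2 ∂(E.K s)) ∂(normalize m)

/-- the strengthened moment assumption (E14): `sup_s E_s((C + ξ(𝟏))^α) < ∞` -/
def E14 (α : ℝ) : Prop := ∃ B : ℝ, ∀ s, ∫ y, |(y.1 : ℝ) + mass y.2| ^ α ∂(E.K s) ≤ B

end UrnScheme

/-- A centered Gaussian process indexed by functions on `S`, with covariance `c`: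
every finite linear combination of its values at bounded measurable functions is a
centered Gaussian random variable with the corresponding variance. -/
def IsCenteredGaussianProcess {Ω' : Type*} [MeasurableSpace Ω'] (P' : Measure Ω')
    (G : (S → ℝ) → Ω' → ℝ) (c : (S → ℝ) → (S → ℝ) → ℝ) : Prop :=
  (∀ f, BddMeas f → Measurable (G f)) ∧
    ∀ (k : ℕ) (f : Fin k → S → ℝ), (∀ i, BddMeas (f i)) → ∀ α : Fin k → ℝ,
      Measure.map (fun ω' => ∑ i, α i * G (f i) ω') P' =
        gaussianReal 0 (Real.toNNReal (∑ i, ∑ j, α i * α j * c (f i) (f j)))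

/-- A continuous-time urn scheme with innovations: the urn scheme together with an
independent standard Poisson process `N` used for the Poisson subordination
`X_t = U_{N(t)}`. -/
structure UrnSchemeCT (S : Type*) [MeasurableSpace S] (Ω : Type*) [mΩ : MeasurableSpace Ω]
    (P : Measure Ω) extends UrnScheme S Ω P where
  /-- the standard Poisson process -/
  N : Ω → ℝ → ℕ
  N_meas : ∀ t, Measurable fun ω => N ω t
  N_zero : ∀ ω, ∀ t ≤ (0 : ℝ), N ω t = 0
  N_mono : ∀ ω, Monotone (N ω)
  N_rightCont : ∀ ω t, ∃ ε > (0 : ℝ), ∀ u ∈ Set.Ico t (t + ε), N ω u = N ω t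
  /-- increments of `N` are Poisson distributed -/
  N_law : ∀ s t : ℝ, 0 ≤ s → s ≤ t →
    Measure.map (fun ω => N ω t - N ω s) P = (poissonPMF (Real.toNNReal (t - s))).toMeasure
  /-- increments of `N` over disjoint intervals are independent -/
  N_indepIncr : ∀ (n : ℕ) (ts : Fin (n + 1) → ℝ), Monotone ts → 0 ≤ ts 0 →
    iIndepFun
      (fun i : Fin n => fun ω => N ω (ts i.succ) - N ω (ts i.castSucc)) P
  /-- `N` is independent of the urn scheme -/
  N_indep_U : Indep (⨆ t : ℝ, MeasurableSpace.comap (fun ω => N ω t) inferInstance)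
      (⨆ n : ℕ, MeasurableSpace.comap (U n) inferInstance) P

namespace UrnSchemeCT

variable {P : Measure Ω} (E : UrnSchemeCT S Ω P)

/-- the continuous-time urn process `X_t = U_{N(t)}` -/
def X (t : ℝ) (ω : Ω) : Measure S := E.U (E.N ω t) ω

/-- the additive functional `∫₀ᵗ dr / X_r(𝟏)` -/
def clock (t : ℝ) (ω : Ω) : ℝ := ∫ r in (0 : ℝ)..t, (mass (E.X r ω))⁻¹

/-- the process `M_t(a) = X_t(a) exp(-λ₁ ∫₀ᵗ dr/X_r(𝟏))` -/
def MA (t : ℝ) (ω : Ω) : ℝ := pairing (E.X t ω) E.a * Real.exp (-E.lam1 * E.clock t ω)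

/-- the process `M_t(f) = X_t(f) exp(-λ₂ ∫₀ᵗ dr/X_r(𝟏))`, relevant when `μ(f) = 0` -/
def MF (f : S → ℝ) (t : ℝ) (ω : Ω) : ℝ :=
  pairing (E.X t ω) f * Real.exp (-E.lam2 * E.clock t ω)

/-- the natural filtration of the continuous-time urn process `X` -/
def filt : Filtration ℝ≥0 mΩ where
  seq t := (⨆ (r : ℝ≥0) (_ : r ≤ t), MeasurableSpace.comap (E.X (r : ℝ)) inferInstance) ⊓ mΩ
  mono' := fun _ _ hij => inf_le_inf
    (iSup₂_le fun r hr => le_iSup₂_of_le r (hr.trans hij) le_rfl) le_rfl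
  le' := fun _ => inf_le_right

/-- the predictable quadratic variation `⟨M(f)⟩_t = ∫₀ᵗ Q(X_r, f) exp(-2λ₂ ∫₀^r du/X_u(𝟏)) dr`
of the martingale `M(f)` (cf. Lemma 3) -/
def bracket (f : S → ℝ) (t : ℝ) (ω : Ω) : ℝ :=
  ∫ r in (0 : ℝ)..t, E.Q (E.X r ω) f * Real.exp (-(2 * E.lam2) * E.clock r ω)

/-- the `k`-th jump time of the Poisson process `N` -/
def gamma (k : ℕ) (ω : Ω) : ℝ := sInf {t : ℝ | k ≤ E.N ω t}

/-- the sum `Σ_{r ≤ t} |ΔM_r(f)|^p` of the `p`-th powers of the jumps of `M(f)`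
up to time `t`; the jump of `M(f)` at the `k`-th sampling time `γ_k` is
`(U_k(f) - U_{k-1}(f)) exp(-λ₂ ∫₀^{γ_k} du/X_u(𝟏))`. -/
def jumpSum (f : S → ℝ) (p : ℝ) (t : ℝ) (ω : Ω) : ℝ≥0∞ :=
  ∑' k : ℕ, if 1 ≤ k ∧ E.gamma k ω ≤ t then
    ENNReal.ofReal ((|pairing (E.U k ω) f - pairing (E.U (k - 1) ω) f| *
      Real.exp (-E.lam2 * E.clock (E.gamma k ω) ω)) ^ p)
  else 0

/-- the total sum `Σ_{t ≥ 0} |ΔM_t(f)|^p` of the `p`-th powers of all jumps of `M(f)` -/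
def jumpSumTotal (f : S → ℝ) (p : ℝ) (ω : Ω) : ℝ≥0∞ :=
  ∑' k : ℕ, if 1 ≤ k then
    ENNReal.ofReal ((|pairing (E.U k ω) f - pairing (E.U (k - 1) ω) f| *
      Real.exp (-E.lam2 * E.clock (E.gamma k ω) ω)) ^ p)
  else 0

/-- the optional quadratic variation `[M(f)]_t`, i.e. the sum of the squared jumps of
`M(f)` up to time `t` -/
def oqv (f : S → ℝ) (t : ℝ) (ω : Ω) : ℝ := (E.jumpSum f 2 t ω).toReal

/-- the Lamperti-type time change `T(t) = inf{r ≥ 0 : ∫₀^r du/X_u(𝟏) > t}` -/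
def TT (t : ℝ) (ω : Ω) : ℝ := sInf {r : ℝ | 0 ≤ r ∧ t < E.clock r ω}

end UrnSchemeCT

/-- A standard real Brownian motion: centered Gaussian independent stationary
increments, continuous paths, started from `0`. -/
def IsBrownian {Ω' : Type*} [MeasurableSpace Ω'] (P' : Measure Ω') (W : ℝ → Ω' → ℝ) : Prop :=
  (∀ t, Measurable (W t)) ∧
  (∀ ω, W 0 ω = 0) ∧
  (∀ᵐ ω ∂P', Continuous fun t => W t ω) ∧
  (∀ s t : ℝ, 0 ≤ s → s ≤ t →
    Measure.map (fun ω => W t ω - W s ω) P' = gaussianReal 0 (Real.toNNReal (t - s))) ∧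
  (∀ (n : ℕ) (ts : Fin (n + 1) → ℝ), Monotone ts → 0 ≤ ts 0 →
    iIndepFun
      (fun i : Fin n => fun ω => W (ts i.succ) ω - W (ts i.castSucc) ω) P')

/-- The Skorokhod `J1` distance between two paths, restricted to the time
interval `[0, T]`: the infimum over time changes `l` (increasing continuous bijections
of `[0, T]` fixing the endpoints) of `max(sup |l(t) - t|, sup |x(l(t)) - y(t)|)`. -/
def skorokhodDistT (T : ℝ) (x y : ℝ → ℝ) : ℝ :=
  ⨅ l : {l : ℝ → ℝ // MonotoneOn l (Set.Icc 0 T) ∧ ContinuousOn l (Set.Icc 0 T) ∧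
      l 0 = 0 ∧ l T = T ∧ Set.BijOn l (Set.Icc 0 T) (Set.Icc 0 T)},
    max (⨆ t ∈ Set.Icc (0 : ℝ) T, |l.1 t - t|) (⨆ t ∈ Set.Icc (0 : ℝ) T, |x (l.1 t) - y t|)

/-- The Skorokhod distance on the path space `D(ℝ₊, ℝ)`. -/
def skorokhodDist (x y : ℝ → ℝ) : ℝ :=
  ∑' m : ℕ, (2 : ℝ)⁻¹ ^ (m + 1) * min 1 (skorokhodDistT (m + 1) x y)

/-- Continuity of a path functional with respect to the Skorokhod topology
on `D(ℝ₊, ℝ)`. -/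
def SkorokhodContinuous (φ : (ℝ → ℝ) → ℝ) : Prop :=
  ∀ (x : ℕ → ℝ → ℝ) (y : ℝ → ℝ), Tendsto (fun n => skorokhodDist (x n) y) atTop (nhds 0) →
    Tendsto (fun n => φ (x n)) atTop (nhds (φ y))

section ExpLowerBoundAux

lemma measurable_mass : Measurable (mass (S := S)) :=
  (Measure.measurable_coe MeasurableSet.univ).ennreal_toReal

lemma mass_nonneg (m : Measure S) : 0 ≤ mass m := ENNReal.toReal_nonneg

lemma measurableSet_infMass : MeasurableSet {m : Measure S | m Set.univ = ∞} :=
  Measure.measurable_coe MeasurableSet.univ (measurableSet_singleton ∞)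

/-- the auxiliary test function `m ↦ exp(-m(𝟏)) 𝟙{m finite}` -/
def phiE : Measure S → ℝ :=
  Set.indicator {m : Measure S | m Set.univ ≠ ∞} (fun m => Real.exp (-(mass m)))

lemma phiE_meas : Measurable (phiE (S := S)) :=
  Measurable.indicator (measurable_mass.neg).exp measurableSet_infMass.compl

lemma phiE_nonneg (m : Measure S) : 0 ≤ phiE m :=
  Set.indicator_nonneg (fun m _ => (Real.exp_pos _).le) m

lemma phiE_of_fin {m : Measure S} (h : m Set.univ ≠ ∞) :
    phiE m = Real.exp (-(mass m)) := by
  unfold phiE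
  rw [Set.indicator_of_mem (show m ∈ {m : Measure S | m Set.univ ≠ ∞} from h)]

lemma phiE_le_one (m : Measure S) : phiE m ≤ 1 := by
  by_cases h : m Set.univ ≠ ∞
  · rw [phiE_of_fin h]
    exact Real.exp_le_one_iff.mpr (by simpa using mass_nonneg m)
  · rw [phiE, Set.indicator_of_notMem h]; exact zero_le_one

lemma phiE_abs_le_one (m : Measure S) : |phiE m| ≤ 1 :=
  abs_le.mpr ⟨by linarith [phiE_nonneg m], phiE_le_one m⟩

lemma IsCounting.univ_ne_top {m : Measure S} (h : IsCounting m) : m Set.univ ≠ ∞ := by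
  obtain ⟨k, z, rfl⟩ := h
  rw [Measure.finset_sum_apply]
  simp

/-- key subtraction bound: removing one ball decreases the total mass by at most one -/
lemma dirac_sub_univ_le [MeasurableSingletonClass S] (μ : Measure S) (s : S) :
    μ Set.univ ≤ (μ - Measure.dirac s) Set.univ + 1 := by
  have hs : MeasurableSet ({s} : Set S) := measurableSet_singleton s
  have hcompl : (μ - Measure.dirac s) {s}ᶜ = μ {s}ᶜ := by
    have hres := Measure.restrict_sub_eq_restrict_sub_restrict
      (μ := μ) (ν := Measure.dirac s) hs.compl
    have hdz : (Measure.dirac s).restrict {s}ᶜ = 0 := by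
      rw [Measure.restrict_eq_zero, Measure.dirac_apply' _ hs.compl]
      simp
    have h0 : μ.restrict {s}ᶜ - (0 : Measure S) = μ.restrict {s}ᶜ := by
      refine le_antisymm Measure.sub_le ?_
      rw [Measure.sub_def]
      exact le_sInf fun d hd => by simpa using hd
    rw [hdz, h0] at hres
    have := congrArg (fun ν : Measure S => ν {s}ᶜ) hres
    simpa [Measure.restrict_apply' hs.compl, Set.inter_self] using this
  have hsing : μ {s} ≤ (μ - Measure.dirac s) {s} + 1 := by
    rcases le_total (μ {s}) 1 with h | h
    · exact h.trans le_add_self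
    · have hres2 := Measure.restrict_sub_eq_restrict_sub_restrict
        (μ := μ) (ν := Measure.dirac s) hs
      have hle : (Measure.dirac s).restrict {s} ≤ μ.restrict {s} := by
        rw [Measure.le_iff']
        intro B
        rw [Measure.restrict_apply' hs, Measure.restrict_apply' hs]
        by_cases hB : s ∈ B
        · have hBs : B ∩ {s} = {s} := by
            ext x; simp only [Set.mem_inter_iff, Set.mem_singleton_iff]
            exact ⟨fun h => h.2, fun h => ⟨h ▸ hB, h⟩⟩
          rw [hBs, Measure.dirac_apply_of_mem (Set.mem_singleton s)]
          exact h
        · have hBs : B ∩ {s} = ∅ := by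
            ext x; simp only [Set.mem_inter_iff, Set.mem_singleton_iff, Set.mem_empty_iff_false,
              iff_false, not_and]
            rintro hx rfl; exact hB hx
          simp [hBs]
      have happ := Measure.sub_apply (μ := μ.restrict {s})
        (ν := (Measure.dirac s).restrict {s}) hs hle
      have e1 : μ.restrict {s} {s} = μ {s} := by
        rw [Measure.restrict_apply' hs, Set.inter_self]
      have e2 : (Measure.dirac s).restrict {s} {s} = 1 := by
        rw [Measure.restrict_apply' hs, Set.inter_self,
          Measure.dirac_apply_of_mem (Set.mem_singleton s)]
      have e3 : (μ - Measure.dirac s) {s} = μ {s} - 1 := by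
        have h4 := congrArg (fun ν : Measure S => ν {s}) hres2
        rw [Measure.restrict_apply' hs, Set.inter_self] at h4
        rw [h4, happ, e1, e2]
      rw [e3, tsub_add_cancel_of_le h]
  calc μ Set.univ = μ {s} + μ {s}ᶜ := (measure_add_measure_compl hs).symm
    _ ≤ ((μ - Measure.dirac s) {s} + 1) + (μ - Measure.dirac s) {s}ᶜ :=
        add_le_add hsing hcompl.ge
    _ = (μ - Measure.dirac s) Set.univ + 1 := by
        rw [add_right_comm, measure_add_measure_compl hs]

lemma big_univ (m : Measure S) (s : S) (y : ℤ × Measure S) :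
    (m + y.2 + ((y.1 + 1).toNat • Measure.dirac s)) Set.univ
      = m Set.univ + y.2 Set.univ + ((y.1 + 1).toNat : ℝ≥0∞) := by
  simp [Measure.add_apply, Measure.smul_apply, smul_eq_mul]

lemma step_univ_le (m : Measure S) (s : S) (y : ℤ × Measure S) :
    (step m s y) Set.univ ≤ m Set.univ + y.2 Set.univ + ((y.1 + 1).toNat : ℝ≥0∞) := by
  rw [← big_univ m s y]
  exact Measure.le_iff'.mp Measure.sub_le Set.univ

lemma step_univ_ne_top {m : Measure S} {y : ℤ × Measure S} (hm : m Set.univ ≠ ∞)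
    (hy : y.2 Set.univ ≠ ∞) (s : S) : (step m s y) Set.univ ≠ ∞ := by
  refine ne_top_of_le_ne_top ?_ (step_univ_le m s y)
  exact ENNReal.add_ne_top.mpr ⟨ENNReal.add_ne_top.mpr ⟨hm, hy⟩, ENNReal.natCast_ne_top _⟩

lemma step_univ_ge [MeasurableSingletonClass S] (m : Measure S) (s : S) (y : ℤ × Measure S) :
    m Set.univ + y.2 Set.univ + ((y.1 + 1).toNat : ℝ≥0∞) ≤ (step m s y) Set.univ + 1 := by
  rw [← big_univ m s y]
  exact dirac_sub_univ_le _ s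

lemma mass_step_ge [MeasurableSingletonClass S] {m : Measure S} {y : ℤ × Measure S}
    (hm : m Set.univ ≠ ∞) (hy : y.2 Set.univ ≠ ∞) (s : S) :
    mass m + ((y.1 : ℝ) + mass y.2) ≤ mass (step m s y) := by
  have hfin : (step m s y) Set.univ ≠ ∞ := step_univ_ne_top hm hy s
  have h1 := step_univ_ge m s y
  have h2 : ((m Set.univ + y.2 Set.univ + ((y.1 + 1).toNat : ℝ≥0∞))).toReal
      ≤ ((step m s y) Set.univ + 1).toReal := by
    refine ENNReal.toReal_mono ?_ h1
    exact ENNReal.add_ne_top.mpr ⟨hfin, ENNReal.one_ne_top⟩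
  rw [ENNReal.toReal_add (ENNReal.add_ne_top.mpr ⟨hm, hy⟩) (ENNReal.natCast_ne_top _),
    ENNReal.toReal_add hm hy, ENNReal.toReal_add hfin ENNReal.one_ne_top] at h2
  have h3 : ((y.1 : ℝ) + 1) ≤ (((y.1 + 1).toNat : ℕ) : ℝ) := by
    have := Int.self_le_toNat (y.1 + 1)
    exact_mod_cast this
  simp only [ENNReal.toReal_natCast, ENNReal.toReal_one] at h2
  unfold mass
  push_cast at h2 h3 ⊢
  linarith

lemma integrable_of_bounded {P : Measure Ω} [IsProbabilityMeasure P] {f : Ω → ℝ}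
    (hf : Measurable f) {C : ℝ} (h : ∀ ω, |f ω| ≤ C) : Integrable f P :=
  Integrable.mono' (integrable_const C) hf.aestronglyMeasurable
    (Filter.Eventually.of_forall fun ω => h ω)

end ExpLowerBoundAux

section ExpLowerBoundCore

variable {P : Measure Ω}

lemma measurableSet_goodEvent :
    MeasurableSet {y : ℤ × Measure S | 1 ≤ (y.1 : ℝ) + mass y.2} := by
  have h : Measurable fun y : ℤ × Measure S => (y.1 : ℝ) + mass y.2 :=
    (measurable_from_top.comp measurable_fst).add (measurable_mass.comp measurable_snd)
  exact measurableSet_le measurable_const h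

/-- per-color one-step estimate for the exponential test function -/
lemma UrnScheme.inner_bound (E : UrnScheme S Ω P) [MeasurableSingletonClass S]
    {c : ℝ} {m : Measure S} (hm : m Set.univ ≠ ∞) (s : S)
    (hcK : c ≤ ((E.K s) {y | 1 ≤ (y.1 : ℝ) + mass y.2}).toReal) (hc1 : c ≤ 1) (hc0 : 0 ≤ c) :
    ∫ y, phiE (step m s y) ∂(E.K s)
      ≤ (1 - (1 - Real.exp (-1)) * c) * Real.exp (-(mass m)) := by
  haveI := E.K_markov
  set A : Set (ℤ × Measure S) := {y | 1 ≤ (y.1 : ℝ) + mass y.2} with hAdef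
  have hA : MeasurableSet A := measurableSet_goodEvent
  set q : ℝ := 1 - Real.exp (-1) with hqdef
  have hq0 : 0 ≤ q := by
    have := Real.exp_le_one_iff.mpr (by norm_num : (-1 : ℝ) ≤ 0)
    simp only [hqdef]; linarith
  have hq1 : q ≤ 1 := by
    have := (Real.exp_pos (-1)).le
    simp only [hqdef]; linarith
  set h : ℤ × Measure S → ℝ :=
    fun y => Real.exp (-(mass m)) * (1 - q * A.indicator (fun _ => (1 : ℝ)) y) with hhdef
  have hind : Integrable (A.indicator (fun _ => (1 : ℝ))) (E.K s) :=
    (integrable_const (1 : ℝ)).indicator hA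
  have hint : Integrable h (E.K s) :=
    (((integrable_const (1 : ℝ)).sub (hind.const_mul q)).const_mul _)
  have hKA1 : ((E.K s) A).toReal ≤ 1 := by
    rw [← ENNReal.toReal_one]
    exact ENNReal.toReal_mono ENNReal.one_ne_top prob_le_one
  have hH : ∫ y, h y ∂(E.K s)
      = Real.exp (-(mass m)) * (1 - q * ((E.K s) A).toReal) := by
    rw [hhdef]
    rw [integral_const_mul]
    congr 1
    rw [integral_sub (integrable_const 1) (hind.const_mul q), integral_const,
      integral_const_mul, integral_indicator_const _ hA]
    simp [measure_univ, measureReal_def]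
  have hmono : ∫ y, phiE (step m s y) ∂(E.K s) ≤ ∫ y, h y ∂(E.K s) := by
    by_cases hint2 : Integrable (fun y => phiE (step m s y)) (E.K s)
    · refine integral_mono_ae hint2 hint ?_
      filter_upwards [E.E1 s] with y hy
      obtain ⟨hC1, hcount, hpos⟩ := hy
      have hξ : y.2 Set.univ ≠ ∞ := hcount.univ_ne_top
      have hstepfin : (step m s y) Set.univ ≠ ∞ := step_univ_ne_top hm hξ s
      have hmass := mass_step_ge hm hξ s
      have hexp : phiE (step m s y)
          ≤ Real.exp (-(mass m)) * Real.exp (-((y.1 : ℝ) + mass y.2)) := by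
        rw [phiE_of_fin hstepfin, ← Real.exp_add]
        exact Real.exp_le_exp.mpr (by linarith)
      by_cases hyA : y ∈ A
      · have h1 : Real.exp (-((y.1 : ℝ) + mass y.2)) ≤ Real.exp (-1) := by
          refine Real.exp_le_exp.mpr ?_
          have : (1 : ℝ) ≤ (y.1 : ℝ) + mass y.2 := hyA
          linarith
        have h2 : h y = Real.exp (-(mass m)) * Real.exp (-1) := by
          rw [hhdef]; simp only [Set.indicator_of_mem hyA, hqdef]; ring
        rw [h2]
        exact hexp.trans (mul_le_mul_of_nonneg_left h1 (Real.exp_pos _).le)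
      · have h1 : Real.exp (-((y.1 : ℝ) + mass y.2)) ≤ 1 := by
          rw [← Real.exp_zero]
          exact Real.exp_le_exp.mpr (by linarith)
        have h2 : h y = Real.exp (-(mass m)) := by
          rw [hhdef]; simp [Set.indicator_of_notMem hyA]
        rw [h2]
        calc phiE (step m s y) ≤ Real.exp (-(mass m)) * Real.exp (-((y.1 : ℝ) + mass y.2)) := hexp
          _ ≤ Real.exp (-(mass m)) * 1 := mul_le_mul_of_nonneg_left h1 (Real.exp_pos _).le
          _ = _ := mul_one _
    · rw [integral_undef hint2, hH]
      have : q * ((E.K s) A).toReal ≤ 1 := by nlinarith [ENNReal.toReal_nonneg (a := (E.K s) A)]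
      nlinarith [Real.exp_pos (-(mass m))]
  refine hmono.trans ?_
  rw [hH, mul_comm]
  have : 1 - q * ((E.K s) A).toReal ≤ 1 - q * c := by nlinarith
  nlinarith [Real.exp_pos (-(mass m))]

/-- one-step estimate, integrated over the sampled color -/
lemma UrnScheme.outer_bound (E : UrnScheme S Ω P) [MeasurableSingletonClass S]
    {c : ℝ} {m : Measure S} (hm : m Set.univ ≠ ∞)
    (hcK : ∀ s, c ≤ ((E.K s) {y | 1 ≤ (y.1 : ℝ) + mass y.2}).toReal)
    (hc1 : c ≤ 1) (hc0 : 0 ≤ c) :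
    ∫ s, (∫ y, phiE (step m s y) ∂(E.K s)) ∂(normalize m)
      ≤ (1 - (1 - Real.exp (-1)) * c) * phiE m := by
  have hq0 : 0 ≤ 1 - Real.exp (-1) := by
    have := Real.exp_le_one_iff.mpr (by norm_num : (-1 : ℝ) ≤ 0); linarith
  have hq1 : 1 - Real.exp (-1) ≤ 1 := by linarith [Real.exp_pos (-1)]
  have hfac0 : 0 ≤ 1 - (1 - Real.exp (-1)) * c := by nlinarith
  by_cases hm0 : m = 0
  · subst hm0
    rw [show normalize (0 : Measure S) = 0 by unfold normalize; simp]
    rw [integral_zero_measure]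
    exact mul_nonneg hfac0 (phiE_nonneg _)
  · haveI : IsProbabilityMeasure (normalize m) := by
      constructor
      unfold normalize
      rw [Measure.smul_apply, smul_eq_mul]
      exact ENNReal.inv_mul_cancel (Measure.measure_univ_ne_zero.mpr hm0) hm
    rw [phiE_of_fin hm]
    by_cases hgint : Integrable (fun s => ∫ y, phiE (step m s y) ∂(E.K s)) (normalize m)
    · calc ∫ s, (∫ y, phiE (step m s y) ∂(E.K s)) ∂(normalize m)
          ≤ ∫ _, (1 - (1 - Real.exp (-1)) * c) * Real.exp (-(mass m)) ∂(normalize m) := by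
            refine integral_mono hgint (integrable_const _) ?_
            exact fun s => E.inner_bound hm s (hcK s) hc1 hc0
        _ = (1 - (1 - Real.exp (-1)) * c) * Real.exp (-(mass m)) := by
            rw [integral_const]; simp
    · rw [integral_undef hgint]
      positivity
end ExpLowerBoundCore

section ExpLowerBoundInduction

variable {P : Measure Ω}

lemma UrnScheme.natFiltD_le (E : UrnScheme S Ω P) (n : ℕ) : natFiltD E.U n ≤ mΩ :=
  iSup₂_le fun k _ => (E.U_meas k).comap_le

/-- almost surely, the urn contains finitely many balls at every step -/
lemma UrnScheme.U_fin (E : UrnScheme S Ω P) [IsProbabilityMeasure P]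
    (n : ℕ) : ∀ᵐ ω ∂P, (E.U n ω) Set.univ ≠ ∞ := by
  induction n with
  | zero =>
    refine Filter.Eventually.of_forall fun ω => ?_
    rw [E.U_zero]
    exact E.m0_counting.univ_ne_top
  | succ n ih =>
    set Φ : Measure S → ℝ :=
      Set.indicator {m : Measure S | m Set.univ = ∞} (fun _ => 1) with hΦdef
    have hΦmeas : Measurable Φ := measurable_const.indicator measurableSet_infMass
    have hΦ01 : ∀ m, |Φ m| ≤ 1 := fun m => by
      rw [hΦdef]
      by_cases h : m ∈ {m : Measure S | m Set.univ = ∞}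
      · rw [Set.indicator_of_mem h]; simp
      · rw [Set.indicator_of_notMem h]; simp
    have hdyn := E.dyn n Φ hΦmeas ⟨1, hΦ01⟩
    have hle := E.natFiltD_le n
    have h0 : ∫ ω, Φ (E.U (n + 1) ω) ∂P = 0 := by
      rw [← integral_condExp hle, integral_congr_ae hdyn]
      refine integral_eq_zero_of_ae ?_
      filter_upwards [ih] with ω hω
      have hinner : ∀ s, ∫ y, Φ (step (E.U n ω) s y) ∂(E.K s) = 0 := by
        intro s
        refine integral_eq_zero_of_ae ?_
        filter_upwards [E.E1 s] with y hy
        have hfin : (step (E.U n ω) s y) Set.univ ≠ ∞ :=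
          step_univ_ne_top hω hy.2.1.univ_ne_top s
        show Φ (step (E.U n ω) s y) = 0
        rw [hΦdef]
        exact Set.indicator_of_notMem
          (show step (E.U n ω) s y ∉ {m : Measure S | m Set.univ = ∞} from hfin) _
      show (∫ s, (∫ y, Φ (step (E.U n ω) s y) ∂(E.K s)) ∂(normalize (E.U n ω))) = (0 : ℝ)
      simp only [hinner, integral_zero]
    have hΦnn : ∀ m : Measure S, 0 ≤ Φ m := fun m =>
      Set.indicator_nonneg (fun _ _ => (zero_le_one : (0 : ℝ) ≤ 1)) m
    have hnn : 0 ≤ᵐ[P] fun ω => Φ (E.U (n + 1) ω) :=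
      Filter.Eventually.of_forall fun ω => hΦnn _
    have hint : Integrable (fun ω => Φ (E.U (n + 1) ω)) P :=
      integrable_of_bounded (hΦmeas.comp (E.U_meas _)) (fun ω => hΦ01 _)
    have hzero := (integral_eq_zero_iff_of_nonneg_ae hnn hint).mp h0
    filter_upwards [hzero] with ω hω hcontra
    have h1 : Φ (E.U (n + 1) ω) = 1 := by
      rw [hΦdef]
      exact Set.indicator_of_mem
        (show E.U (n + 1) ω ∈ {m : Measure S | m Set.univ = ∞} from hcontra) _
    rw [h1] at hω
    exact one_ne_zero hω

/-- geometric decay of the exponential moment of the urn size -/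
lemma UrnScheme.phi_moment (E : UrnScheme S Ω P) [IsProbabilityMeasure P]
    [MeasurableSingletonClass S] {c : ℝ}
    (hcK : ∀ s, c ≤ ((E.K s) {y | 1 ≤ (y.1 : ℝ) + mass y.2}).toReal)
    (hc1 : c ≤ 1) (hc0 : 0 ≤ c) (n : ℕ) :
    ∫ ω, phiE (E.U n ω) ∂P ≤ (1 - (1 - Real.exp (-1)) * c) ^ n := by
  have hq0 : 0 ≤ 1 - Real.exp (-1) := by
    linarith [Real.exp_le_one_iff.mpr (by norm_num : (-1 : ℝ) ≤ 0)]
  have hq1 : 1 - Real.exp (-1) ≤ 1 := by linarith [Real.exp_pos (-1)]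
  have hfac0 : 0 ≤ 1 - (1 - Real.exp (-1)) * c := by nlinarith
  induction n with
  | zero =>
    simp only [pow_zero]
    calc ∫ ω, phiE (E.U 0 ω) ∂P ≤ ∫ _ω, (1 : ℝ) ∂P := by
          refine integral_mono (integrable_of_bounded (phiE_meas.comp (E.U_meas 0))
            (fun ω => phiE_abs_le_one _)) (integrable_const 1) (fun ω => phiE_le_one _)
      _ = 1 := by simp
  | succ n ih =>
    have hdyn := E.dyn n phiE phiE_meas ⟨1, fun m => phiE_abs_le_one m⟩
    have hle := E.natFiltD_le n
    have hFint : Integrable (fun ω =>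
        ∫ s, (∫ y, phiE (step (E.U n ω) s y) ∂(E.K s)) ∂(normalize (E.U n ω))) P :=
      integrable_condExp.congr hdyn
    have hUint : Integrable (fun ω => phiE (E.U n ω)) P :=
      integrable_of_bounded (phiE_meas.comp (E.U_meas n)) (fun ω => phiE_abs_le_one _)
    calc ∫ ω, phiE (E.U (n + 1) ω) ∂P
        = ∫ ω, (∫ s, (∫ y, phiE (step (E.U n ω) s y) ∂(E.K s)) ∂(normalize (E.U n ω))) ∂P := by
          rw [← integral_condExp hle, integral_congr_ae hdyn]
      _ ≤ ∫ ω, (1 - (1 - Real.exp (-1)) * c) * phiE (E.U n ω) ∂P := by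
          refine integral_mono_ae hFint (hUint.const_mul _) ?_
          filter_upwards [E.U_fin n] with ω hω
          exact E.outer_bound hω hcK hc1 hc0
      _ = (1 - (1 - Real.exp (-1)) * c) * ∫ ω, phiE (E.U n ω) ∂P := integral_const_mul _ _
      _ ≤ (1 - (1 - Real.exp (-1)) * c) * (1 - (1 - Real.exp (-1)) * c) ^ n :=
          mul_le_mul_of_nonneg_left ih hfac0
      _ = (1 - (1 - Real.exp (-1)) * c) ^ (n + 1) := (pow_succ' _ _).symm

end ExpLowerBoundInduction

section ExpLowerBoundFinal

variable {P : Measure Ω}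

/-- Markov-type tail bound for the size of the urn after `k` steps -/
lemma UrnScheme.mass_tail (E : UrnScheme S Ω P) [IsProbabilityMeasure P]
    [MeasurableSingletonClass S] {c : ℝ}
    (hcK : ∀ s, c ≤ ((E.K s) {y | 1 ≤ (y.1 : ℝ) + mass y.2}).toReal)
    (hc1 : c ≤ 1) (hc0 : 0 ≤ c) {r : ℝ} (hr : 0 ≤ r) (k : ℕ) :
    P {ω | mass (E.U k ω) ≤ r}
      ≤ ENNReal.ofReal (Real.exp r * (1 - (1 - Real.exp (-1)) * c) ^ k) := by
  have hq0 : 0 ≤ 1 - Real.exp (-1) := by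
    linarith [Real.exp_le_one_iff.mpr (by norm_num : (-1 : ℝ) ≤ 0)]
  have hq1 : 1 - Real.exp (-1) ≤ 1 := by linarith [Real.exp_pos (-1)]
  have hQ0 : 0 ≤ 1 - (1 - Real.exp (-1)) * c := by nlinarith
  have hsub : {ω | mass (E.U k ω) ≤ r}
      ⊆ {ω | Real.exp (-r) ≤ phiE (E.U k ω)} ∪ {ω | (E.U k ω) Set.univ = ∞} := by
    intro ω hω
    by_cases hfin : (E.U k ω) Set.univ = ∞
    · exact Or.inr hfin
    · left
      show Real.exp (-r) ≤ phiE (E.U k ω)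
      rw [phiE_of_fin hfin]
      exact Real.exp_le_exp.mpr (neg_le_neg hω)
  have hinf : P {ω | (E.U k ω) Set.univ = ∞} = 0 := by
    have h := E.U_fin (P := P) k
    rw [ae_iff] at h
    simpa only [not_not] using h
  have hG : (P {ω | Real.exp (-r) ≤ phiE (E.U k ω)}).toReal
      ≤ Real.exp r * (1 - (1 - Real.exp (-1)) * c) ^ k := by
    have hmark := mul_meas_ge_le_integral_of_nonneg
      (μ := P) (f := fun ω => phiE (E.U k ω))
      (Filter.Eventually.of_forall fun ω => phiE_nonneg (E.U k ω))
      (integrable_of_bounded (phiE_meas.comp (E.U_meas k)) fun ω => phiE_abs_le_one _)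
      (Real.exp (-r))
    have h2 : Real.exp (-r) * (P {ω | Real.exp (-r) ≤ phiE (E.U k ω)}).toReal
        ≤ (1 - (1 - Real.exp (-1)) * c) ^ k :=
      hmark.trans (E.phi_moment hcK hc1 hc0 k)
    have h3 := mul_le_mul_of_nonneg_left h2 (Real.exp_pos r).le
    rw [← mul_assoc, ← Real.exp_add] at h3
    simpa using h3
  calc P {ω | mass (E.U k ω) ≤ r}
      ≤ P {ω | Real.exp (-r) ≤ phiE (E.U k ω)} + P {ω | (E.U k ω) Set.univ = ∞} :=
        (measure_mono hsub).trans (measure_union_le _ _)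
    _ = P {ω | Real.exp (-r) ≤ phiE (E.U k ω)} := by rw [hinf, add_zero]
    _ ≤ ENNReal.ofReal (Real.exp r * (1 - (1 - Real.exp (-1)) * c) ^ k) := by
        refine (ENNReal.le_ofReal_iff_toReal_le (measure_ne_top _ _) ?_).mpr hG
        positivity

end ExpLowerBoundFinal


/-- **Lemma 1(ii) (exponential lower bound).** There exists `ε > 0` such that
`e^(εt) P(X_t(𝟏) ≤ εt) → 0` as `t → ∞`. -/
theorem exponential_lower_bound [StandardBorelSpace S] {P : Measure Ω}
    [IsProbabilityMeasure P] (E : UrnSchemeCT S Ω P) :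
    ∃ ε : ℝ, 0 < ε ∧ Tendsto
      (fun t : ℝ => Real.exp (ε * t) * (P {ω | mass (E.X t ω) ≤ ε * t}).toReal)
      atTop (nhds 0) := by
  classical
  obtain ⟨c₀, hc₀pos, hc₀K⟩ := E.E4lower
  set c : ℝ := min c₀ 2⁻¹ with hcdef
  have hc0 : 0 < c := lt_min hc₀pos (by norm_num)
  have hc1 : c ≤ 1 := (min_le_right _ _).trans (by norm_num)
  have hchalf : c ≤ 2⁻¹ := min_le_right _ _
  have hcK : ∀ s, c ≤ ((E.K s) {y | 1 ≤ (y.1 : ℝ) + mass y.2}).toReal :=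
    fun s => (min_le_left _ _).trans (hc₀K s)
  have hq0 : 0 < 1 - Real.exp (-1) := by
    have : Real.exp (-1) < Real.exp 0 := Real.exp_lt_exp.mpr (by norm_num)
    rw [Real.exp_zero] at this; linarith
  have hq1 : 1 - Real.exp (-1) ≤ 1 := by linarith [Real.exp_pos (-1)]
  set δ : ℝ := (1 - Real.exp (-1)) * c with hδdef
  have hδ0 : 0 < δ := mul_pos hq0 hc0
  have hδ1 : δ ≤ 2⁻¹ := by
    calc δ ≤ 1 * 2⁻¹ := by
          rw [hδdef]; exact mul_le_mul hq1 hchalf hc0.le zero_le_one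
      _ = 2⁻¹ := one_mul _
  have hQ0 : 0 ≤ 1 - δ := by linarith
  refine ⟨δ / 4, by positivity, ?_⟩
  have key : ∀ t : ℝ, 0 ≤ t →
      Real.exp (δ / 4 * t) * (P {ω | mass (E.X t ω) ≤ δ / 4 * t}).toReal
        ≤ Real.exp (-(δ / 2 * t)) := by
    intro t ht
    set r : ℝ := δ / 4 * t with hrdef
    have hr : 0 ≤ r := by positivity
    -- decomposition over the value of the Poisson process
    have hsub : {ω | mass (E.X t ω) ≤ r}
        ⊆ ⋃ k : ℕ, ({ω | E.N ω t = k} ∩ {ω | mass (E.U k ω) ≤ r}) := fun ω hω =>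
      Set.mem_iUnion.mpr ⟨E.N ω t, ⟨rfl, hω⟩⟩
    -- independence and the Poisson law
    have hterm : ∀ k : ℕ, P ({ω | E.N ω t = k} ∩ {ω | mass (E.U k ω) ≤ r})
        ≤ ENNReal.ofReal ((Real.exp (-t) * t ^ k / k.factorial)
            * (Real.exp r * (1 - δ) ^ k)) := by
      intro k
      have hmeasB : MeasurableSet[⨆ n : ℕ, MeasurableSpace.comap (E.U n) inferInstance]
          {ω | mass (E.U k ω) ≤ r} := by
        have h1 : MeasurableSet[MeasurableSpace.comap (E.U k) inferInstance]
            {ω | mass (E.U k ω) ≤ r} :=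
          ⟨{m : Measure S | mass m ≤ r}, measurableSet_le measurable_mass measurable_const, rfl⟩
        exact (le_iSup (fun n : ℕ => MeasurableSpace.comap (E.U n) inferInstance) k) _ h1
      have hmeasN : MeasurableSet[⨆ u : ℝ,
          MeasurableSpace.comap (fun ω => E.N ω u) inferInstance] {ω | E.N ω t = k} := by
        have h1 : MeasurableSet[MeasurableSpace.comap (fun ω => E.N ω t) inferInstance]
            {ω | E.N ω t = k} :=
          ⟨{k}, measurableSet_singleton k, by ext ω; simp⟩
        exact (le_iSup (fun u : ℝ =>
          MeasurableSpace.comap (fun ω => E.N ω u) inferInstance) t) _ h1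
      have hindep := (ProbabilityTheory.Indep_iff _ _ P).mp E.N_indep_U _ _ hmeasN hmeasB
      rw [hindep]
      have hNt : P {ω | E.N ω t = k}
          = ENNReal.ofReal (Real.exp (-t) * t ^ k / k.factorial) := by
        have hlaw := E.N_law 0 t le_rfl ht
        have heq : (fun ω => E.N ω t - E.N ω 0) = fun ω => E.N ω t := by
          funext ω; rw [E.N_zero ω 0 le_rfl, Nat.sub_zero]
        rw [heq] at hlaw
        have hset : P {ω | E.N ω t = k} = Measure.map (fun ω => E.N ω t) P {k} := by
          rw [Measure.map_apply (E.N_meas t) (measurableSet_singleton k)]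
          congr 1
        rw [hset, hlaw, PMF.toMeasure_apply_singleton _ _ (measurableSet_singleton k)]
        have hv : poissonPMFReal (t - 0).toNNReal k
            = Real.exp (-t) * t ^ k / k.factorial := by
          unfold ProbabilityTheory.poissonPMFReal
          rw [sub_zero, Real.coe_toNNReal _ ht]
        rw [← hv]
        rfl
      rw [hNt]
      have hmt := E.toUrnScheme.mass_tail hcK hc1 hc0.le hr k
      refine le_trans (mul_le_mul_right hmt _) ?_
      rw [← ENNReal.ofReal_mul (by positivity)]
    -- summing up
    set a : ℕ → ℝ := fun k =>
      (Real.exp (-t) * t ^ k / k.factorial) * (Real.exp r * (1 - δ) ^ k) with hadef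
    have ha : ∀ k, a k = (Real.exp (-t) * Real.exp r) * ((t * (1 - δ)) ^ k / k.factorial) := by
      intro k; rw [hadef]; simp only [mul_pow]; ring
    have hsummable : Summable a := by
      refine Summable.congr ((Real.summable_pow_div_factorial (t * (1 - δ))).mul_left
        (Real.exp (-t) * Real.exp r)) fun k => (ha k).symm
    have hann : ∀ k, 0 ≤ a k := by
      intro k; rw [ha k]; positivity
    have htsum : ∑' k, a k = Real.exp (-t) * Real.exp r * Real.exp (t * (1 - δ)) := by
      calc ∑' k, a k
          = ∑' k, (Real.exp (-t) * Real.exp r) * ((t * (1 - δ)) ^ k / k.factorial) :=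
            tsum_congr ha
        _ = (Real.exp (-t) * Real.exp r) * ∑' k : ℕ, (t * (1 - δ)) ^ k / k.factorial :=
            tsum_mul_left
        _ = Real.exp (-t) * Real.exp r * Real.exp (t * (1 - δ)) := by
            rw [Real.exp_eq_exp_ℝ, NormedSpace.exp_eq_tsum_div]
    have hbad : P {ω | mass (E.X t ω) ≤ r}
        ≤ ENNReal.ofReal (Real.exp (-t) * Real.exp r * Real.exp (t * (1 - δ))) := by
      calc P {ω | mass (E.X t ω) ≤ r}
          ≤ ∑' k : ℕ, P ({ω | E.N ω t = k} ∩ {ω | mass (E.U k ω) ≤ r}) :=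
            (measure_mono hsub).trans (measure_iUnion_le _)
        _ ≤ ∑' k : ℕ, ENNReal.ofReal (a k) := ENNReal.tsum_le_tsum hterm
        _ = ENNReal.ofReal (∑' k, a k) := (ENNReal.ofReal_tsum_of_nonneg hann hsummable).symm
        _ = ENNReal.ofReal (Real.exp (-t) * Real.exp r * Real.exp (t * (1 - δ))) := by
            rw [htsum]
    have htR : (P {ω | mass (E.X t ω) ≤ r}).toReal
        ≤ Real.exp (-t) * Real.exp r * Real.exp (t * (1 - δ)) :=
      ENNReal.toReal_le_of_le_ofReal (by positivity) hbad
    calc Real.exp (δ / 4 * t) * (P {ω | mass (E.X t ω) ≤ δ / 4 * t}).toReal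
        ≤ Real.exp (δ / 4 * t) * (Real.exp (-t) * Real.exp r * Real.exp (t * (1 - δ))) :=
          mul_le_mul_of_nonneg_left htR (Real.exp_pos _).le
      _ = Real.exp (δ / 4 * t + -t + r + t * (1 - δ)) := by
          rw [Real.exp_add, Real.exp_add, Real.exp_add]; ring
      _ = Real.exp (-(δ / 2 * t)) := by
          congr 1
          rw [hrdef]; ring
  have hg : Tendsto (fun t : ℝ => Real.exp (-(δ / 2 * t))) atTop (nhds 0) :=
    Real.tendsto_exp_atBot.comp
      (tendsto_neg_atTop_atBot.comp (tendsto_id.const_mul_atTop (by positivity)))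
  refine squeeze_zero' ?_ ?_ hg
  · exact Filter.Eventually.of_forall fun t =>
      mul_nonneg (Real.exp_pos _).le ENNReal.toReal_nonneg
  · filter_upwards [Filter.eventually_ge_atTop (0 : ℝ)] with t ht using key t ht


end PolyaUrn
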